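/- Let ℓ be a prime and let P be a finite ℓ-group of ℓ-rank at least 3 (P contains an elementary abelian ℓ-subgroup of order ℓ³) whose center Z(P) is not cyclic. Then P has no maximal elementary abelian ℓ-subgroup of rank 2; that is, every elementary abelian ℓ-subgroup E of P with |E| = ℓ² is properly contained in some elementary abelian ℓ-subgroup of P. -/

import Mathlib

/-- An elementary abelian `ℓ`-subgroup: a subgroup that is commutative and in which
every element `x` satisfies `x ^ ℓ = 1`. -/
def IsElementaryAbelian (ℓ : ℕ) {G : Type*} [Group G] (E : Subgroup G) : Prop :=
  (∀ x ∈ E, ∀ y ∈ E, x * y = y * x) ∧ ∀ x ∈ E, x ^ ℓ = 1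

/-- The conjugate subgroup `g E g⁻¹`. -/
def conjSubgroup {G : Type*} [Group G] (g : G) (E : Subgroup G) : Subgroup G :=
  E.map (MulAut.conj g).toMonoidHom

/-- A maximal elementary abelian `ℓ`-subgroup: one that is not properly contained in
any other elementary abelian `ℓ`-subgroup. -/
def IsMaximalElementaryAbelian (ℓ : ℕ) {G : Type*} [Group G] (E : Subgroup G) : Prop :=
  IsElementaryAbelian ℓ E ∧
    ∀ E' : Subgroup G, IsElementaryAbelian ℓ E' → E ≤ E' → E' = E

open scoped Pointwise IsMulCommutative

private lemma normal_of_le_center' {G : Type*} [Group G] {C : Subgroup G}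
    (h : C ≤ Subgroup.center G) : C.Normal := by
  constructor
  intro n hn g
  have hcomm := (Subgroup.mem_center_iff.mp (h hn)) g
  have : g * n * g⁻¹ = n := by rw [hcomm]; group
  rwa [this]

/-- Joining an elementary abelian subgroup with a central elementary abelian subgroup
gives an elementary abelian subgroup. -/
private lemma sup_isElemAb {ℓ : ℕ} {G : Type*} [Group G] {F C : Subgroup G}
    (hF : IsElementaryAbelian ℓ F) (hC : IsElementaryAbelian ℓ C)
    (hcen : C ≤ Subgroup.center G) : IsElementaryAbelian ℓ (F ⊔ C) := by
  haveI : C.Normal := normal_of_le_center' hcen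
  have hcomm : ∀ c ∈ C, ∀ g : G, Commute c g := fun c hc g =>
    ((Subgroup.mem_center_iff.mp (hcen hc)) g).symm
  have hmem : ∀ x ∈ F ⊔ C, ∃ f ∈ F, ∃ c ∈ C, f * c = x := by
    intro x hx
    have hx' : x ∈ (F : Set G) * (C : Set G) := by
      rw [← Subgroup.mul_normal F C]; exact hx
    obtain ⟨f, hf, c, hc, h⟩ := Set.mem_mul.mp hx'
    exact ⟨f, hf, c, hc, h⟩
  constructor
  · intro x hx y hy
    obtain ⟨f1, hf1, c1, hc1, rfl⟩ := hmem x hx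
    obtain ⟨f2, hf2, c2, hc2, rfl⟩ := hmem y hy
    have h12 : Commute f1 f2 := hF.1 f1 hf1 f2 hf2
    exact (Commute.mul_left ((h12).mul_right (hcomm c2 hc2 f1).symm)
      (hcomm c1 hc1 (f2 * c2)))
  · intro x hx
    obtain ⟨f, hf, c, hc, rfl⟩ := hmem x hx
    rw [(hcomm c hc f).symm.mul_pow, hF.2 f hf, hC.2 c hc, one_mul]

/-- In a finite commutative group with at most `ℓ` solutions of `x ^ ℓ = 1`,
there are at most `ℓ ^ k` solutions of `x ^ ℓ ^ k = 1`. -/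
private lemma card_pow_ker_le {Z : Type*} [CommGroup Z] [Finite Z] {ℓ : ℕ}
    (h1 : Nat.card (MonoidHom.ker (powMonoidHom ℓ : Z →* Z)) ≤ ℓ) (k : ℕ) :
    Nat.card (MonoidHom.ker (powMonoidHom (ℓ ^ k) : Z →* Z)) ≤ ℓ ^ k := by
  induction k with
  | zero =>
    have hbot : (MonoidHom.ker (powMonoidHom (ℓ ^ 0) : Z →* Z)) = ⊥ := by
      ext x; simp [MonoidHom.mem_ker, powMonoidHom_apply]
    rw [hbot]; simp
  | succ k ih =>
    set K := MonoidHom.ker (powMonoidHom (ℓ ^ (k + 1)) : Z →* Z) with hK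
    set g : K →* Z := (powMonoidHom ℓ).comp K.subtype with hg
    have hcard : Nat.card K = Nat.card (K ⧸ g.ker) * Nat.card g.ker :=
      Subgroup.card_eq_card_quotient_mul_card_subgroup g.ker
    have h2 : Nat.card (K ⧸ g.ker) = Nat.card g.range :=
      Nat.card_congr (QuotientGroup.quotientKerEquivRange g).toEquiv
    have h3 : Nat.card g.range ≤ ℓ ^ k := by
      refine le_trans (Subgroup.card_le_of_le ?_) ih
      rintro _ ⟨x, rfl⟩
      have hx : (x : Z) ^ (ℓ ^ (k + 1)) = 1 := x.2
      simp only [MonoidHom.mem_ker, powMonoidHom_apply, hg, MonoidHom.comp_apply,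
        Subgroup.coe_subtype]
      rw [← pow_mul, ← pow_succ']
      exact hx
    have h4 : Nat.card g.ker ≤ ℓ := by
      refine le_trans (Nat.card_le_card_of_injective
        (fun x : g.ker => (⟨((x : K) : Z), by
          rw [MonoidHom.mem_ker, powMonoidHom_apply]
          exact x.2⟩ :
          MonoidHom.ker (powMonoidHom ℓ : Z →* Z))) ?_) h1
      intro a b hab
      have := congrArg Subtype.val hab
      simp only at this
      ext
      exact_mod_cast this
    calc Nat.card K = Nat.card (K ⧸ g.ker) * Nat.card g.ker := hcard
      _ = Nat.card g.range * Nat.card g.ker := by rw [h2]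
      _ ≤ ℓ ^ k * ℓ := Nat.mul_le_mul h3 h4
      _ = ℓ ^ (k + 1) := (pow_succ ℓ k).symm

/-- A finite commutative `ℓ`-group with at most `ℓ` solutions of `x ^ ℓ = 1` is cyclic. -/
private lemma isCyclic_of_few_roots {Z : Type*} [CommGroup Z] [Finite Z] {ℓ : ℕ}
    (hℓ : ℓ.Prime) (hZp : IsPGroup ℓ Z)
    (h1 : Nat.card (MonoidHom.ker (powMonoidHom ℓ : Z →* Z)) ≤ ℓ) : IsCyclic Z := by
  classical
  haveI := Fact.mk hℓ
  cases nonempty_fintype Z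
  obtain ⟨e, he⟩ := IsPGroup.iff_card.mp hZp
  apply isCyclic_of_card_pow_eq_one_le
  intro n hn
  obtain ⟨k, hk, hdk⟩ := (Nat.dvd_prime_pow hℓ).mp (Nat.gcd_dvd_right n (ℓ ^ e))
  have hkn : ℓ ^ k ≤ n := Nat.le_of_dvd hn (hdk ▸ Nat.gcd_dvd_left n (ℓ ^ e))
  have hsub : (Finset.univ.filter fun a : Z => a ^ n = 1) ⊆
      Finset.univ.filter fun a : Z => a ^ (ℓ ^ k) = 1 := by
    intro a ha
    simp only [Finset.mem_filter, Finset.mem_univ, true_and] at ha ⊢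
    have hd1 : orderOf a ∣ n := orderOf_dvd_of_pow_eq_one ha
    have hd2 : orderOf a ∣ ℓ ^ e := he ▸ orderOf_dvd_natCard a
    exact orderOf_dvd_iff_pow_eq_one.mp (hdk ▸ Nat.dvd_gcd hd1 hd2)
  have hcount : (Finset.univ.filter fun a : Z => a ^ (ℓ ^ k) = 1).card ≤ ℓ ^ k := by
    have hle := card_pow_ker_le h1 k
    calc (Finset.univ.filter fun a : Z => a ^ (ℓ ^ k) = 1).card
        = Fintype.card {a : Z // a ^ (ℓ ^ k) = 1} := (Fintype.card_subtype _).symm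
      _ = Nat.card {a : Z // a ^ (ℓ ^ k) = 1} := (Nat.card_eq_fintype_card).symm
      _ = Nat.card (MonoidHom.ker (powMonoidHom (ℓ ^ k) : Z →* Z)) := by
          refine Nat.card_congr (Equiv.subtypeEquivRight ?_).symm
          intro x
          simp [MonoidHom.mem_ker, powMonoidHom_apply]
      _ ≤ ℓ ^ k := hle
  exact le_trans (le_trans (Finset.card_le_card hsub) hcount) hkn

/-- A finite `ℓ`-group of `ℓ`-rank at least 3 with noncyclic center has no
maximal elementary abelian `ℓ`-subgroup of rank 2. -/
theorem no_maximal_rank_two_of_rank_three_noncyclic_center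
    (ℓ : ℕ) (hℓ : ℓ.Prime) (P : Type*) [Group P] [Finite P] (hP : IsPGroup ℓ P)
    (hrk3 : ∃ E : Subgroup P, IsElementaryAbelian ℓ E ∧ Nat.card E = ℓ ^ 3)
    (hZ : ¬ IsCyclic (Subgroup.center P)) :
    ∀ E : Subgroup P, IsElementaryAbelian ℓ E → Nat.card E = ℓ ^ 2 →
      ∃ E' : Subgroup P, IsElementaryAbelian ℓ E' ∧ E < E' := by
  intro E hE hcard
  haveI := Fact.mk hℓ
  by_cases hA : ∃ z ∈ Subgroup.center P, z ^ ℓ = 1 ∧ z ∉ E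
  · -- join E with a central element of order dividing ℓ outside E
    obtain ⟨z, hz, hzℓ, hzE⟩ := hA
    have hCel : IsElementaryAbelian ℓ (Subgroup.zpowers z) := by
      constructor
      · intro x hx y hy
        obtain ⟨a, rfl⟩ := Subgroup.mem_zpowers_iff.mp hx
        obtain ⟨b, rfl⟩ := Subgroup.mem_zpowers_iff.mp hy
        rw [← zpow_add, ← zpow_add, add_comm]
      · intro x hx
        obtain ⟨a, rfl⟩ := Subgroup.mem_zpowers_iff.mp hx
        rw [← zpow_natCast (z ^ a) ℓ, ← zpow_mul, mul_comm, zpow_mul, zpow_natCast, hzℓ,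
          one_zpow]
    refine ⟨E ⊔ Subgroup.zpowers z, sup_isElemAb hE hCel (Subgroup.zpowers_le.mpr hz), ?_⟩
    refine lt_of_le_of_ne le_sup_left fun h => hzE ?_
    rw [h]
    exact (le_sup_right : Subgroup.zpowers z ≤ _) (Subgroup.mem_zpowers z)
  · -- every central element of order dividing ℓ lies in E
    push_neg at hA
    set Z := Subgroup.center P with hZdef
    have hZp : IsPGroup ℓ Z := hP.to_subgroup Z
    set Ω : Subgroup P :=
      Subgroup.map Z.subtype (MonoidHom.ker (powMonoidHom ℓ : Z →* Z)) with hΩ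
    have hΩE : Ω ≤ E := by
      rintro _ ⟨z, hzker, rfl⟩
      have hz1 : (z : P) ^ ℓ = 1 := by
        have h : z ^ ℓ = 1 := hzker
        have h2 : ((z ^ ℓ : Z) : P) = ((1 : Z) : P) := congrArg _ h
        simpa using h2
      exact hA (z : P) z.2 hz1
    have hΩcard : Nat.card Ω = Nat.card (MonoidHom.ker (powMonoidHom ℓ : Z →* Z)) :=
      (Nat.card_congr (Subgroup.equivMapOfInjective _ _ Z.subtype_injective).toEquiv).symm
    have hdvd : Nat.card Ω ∣ ℓ ^ 2 := hcard ▸ Subgroup.card_dvd_of_le hΩE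
    obtain ⟨k, hk2, hkcard⟩ := (Nat.dvd_prime_pow hℓ).mp hdvd
    rcases Nat.lt_or_ge k 2 with hklt | hkge
    · -- then the ℓ-torsion of the center is small, so the center is cyclic: contradiction
      exfalso
      apply hZ
      refine isCyclic_of_few_roots hℓ hZp ?_
      rw [← hΩcard, hkcard]
      calc ℓ ^ k ≤ ℓ ^ 1 := Nat.pow_le_pow_right hℓ.one_le (by omega)
        _ = ℓ := pow_one ℓ
    · -- then Ω = E, so E is central; join it with a rank-3 elementary abelian subgroup
      have hk2' : k = 2 := le_antisymm hk2 hkge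
      have hEΩ : Ω = E := Subgroup.eq_of_le_of_card_ge hΩE
        (by rw [hcard, hkcard, hk2'])
      have hEcen : E ≤ Subgroup.center P := by
        rw [← hEΩ, hΩ]
        exact Subgroup.map_subtype_le _
      obtain ⟨F, hF, hFcard⟩ := hrk3
      refine ⟨F ⊔ E, sup_isElemAb hF hE hEcen, ?_⟩
      refine lt_of_le_of_ne le_sup_right fun h => ?_
      have hFE : F ≤ E := h ▸ le_sup_left
      have := Subgroup.card_le_of_le hFE
      rw [hcard, hFcard] at this
      exact absurd this (not_le.mpr (Nat.pow_lt_pow_right hℓ.one_lt (by omega)))
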